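/- For T in GL(2,ℝ) given by the matrix [[1,1],[0,1]], T is distal on ℝ² (i.e., for every nonzero v, the orbit closure of v under {Tⁿ : n ∈ ℤ} does not contain 0), but the induced map T̄(x) = T(x)/‖T(x)‖ on the unit circle S¹ is not distal. -/

import Mathlib

lemma matpow (m : ℕ) : (!![1,1;0,1] : Matrix (Fin 2) (Fin 2) ℝ)^m = !![1,(m:ℝ);0,1] := by
  induction m with
  | zero => simp [Matrix.one_fin_two]
  | succ k ih =>
    rw [pow_succ, ih]
    norm_num [Matrix.mul_fin_two, add_comm]

lemma matzpow (T : GL (Fin 2) ℝ)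
    (hT : (T : Matrix (Fin 2) (Fin 2) ℝ) = !![1, 1; 0, 1]) (n : ℤ) :
    ((T ^ n : GL (Fin 2) ℝ) : Matrix (Fin 2) (Fin 2) ℝ) = !![1,(n:ℝ);0,1] := by
  have hnat : ∀ m : ℕ, ((T ^ m : GL (Fin 2) ℝ) : Matrix (Fin 2) (Fin 2) ℝ) = !![1,(m:ℝ);0,1] := by
    intro m
    have : ((T ^ m : GL (Fin 2) ℝ) : Matrix (Fin 2) (Fin 2) ℝ)
        = ((T : Matrix (Fin 2) (Fin 2) ℝ))^m := Units.val_pow_eq_pow_val T m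
    rw [this, hT, matpow]
  cases n with
  | ofNat m => simpa using hnat m
  | negSucc k =>
    rw [zpow_negSucc, Matrix.coe_units_inv, hnat (k+1)]
    rw [Matrix.inv_eq_right_inv (B := !![1,-((k:ℝ)+1);0,1])
      (by norm_num [Matrix.mul_fin_two]; rw [Matrix.one_fin_two])]
    push_cast
    norm_num

lemma applemma (A : Matrix (Fin 2) (Fin 2) ℝ) (v : EuclideanSpace ℝ (Fin 2)) (i : Fin 2) :
    Matrix.toEuclideanLin A v i = A i 0 * v 0 + A i 1 * v 1 := by
  show A.mulVec v i = _
  simp [Matrix.mulVec, dotProduct, Fin.sum_univ_two]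

lemma abslenorm (x : EuclideanSpace ℝ (Fin 2)) (i : Fin 2) : |x i| ≤ ‖x‖ := by
  rw [EuclideanSpace.norm_eq]
  have h1 : |x i| = Real.sqrt (‖x i‖^2) := by
    rw [Real.sqrt_sq_eq_abs]; simp [Real.norm_eq_abs]
  rw [h1]
  apply Real.sqrt_le_sqrt
  exact Finset.single_le_sum (f := fun j => ‖x j‖^2) (fun j _ => by positivity) (Finset.mem_univ i)

lemma normtwo (x : EuclideanSpace ℝ (Fin 2)) : ‖x‖ = Real.sqrt ((x 0)^2 + (x 1)^2) := by
  rw [EuclideanSpace.norm_eq, Fin.sum_univ_two]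
  simp [Real.norm_eq_abs, sq_abs]

lemma sqrt_sum_sq_le (a b : ℝ) : Real.sqrt (a^2 + b^2) ≤ |a| + |b| := by
  rw [show |a|+|b| = Real.sqrt ((|a|+|b|)^2) from (Real.sqrt_sq (by positivity)).symm]
  apply Real.sqrt_le_sqrt
  nlinarith [sq_abs a, sq_abs b, mul_nonneg (abs_nonneg a) (abs_nonneg b)]

/-- The normalized ("projective") action of a matrix on `ℝ^m`. -/
noncomputable def nact {m : ℕ} (A : Matrix (Fin m) (Fin m) ℝ)
    (x : EuclideanSpace ℝ (Fin m)) : EuclideanSpace ℝ (Fin m) :=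
  ‖Matrix.toEuclideanLin A x‖⁻¹ • Matrix.toEuclideanLin A x

theorem stmt0 (T : GL (Fin 2) ℝ)
    (hT : (T : Matrix (Fin 2) (Fin 2) ℝ) = !![1, 1; 0, 1]) :
    (∀ v : EuclideanSpace ℝ (Fin 2), v ≠ 0 →
      (0 : EuclideanSpace ℝ (Fin 2)) ∉
        closure {w : EuclideanSpace ℝ (Fin 2) |
          ∃ n : ℤ, w = Matrix.toEuclideanLin ((T ^ n : GL (Fin 2) ℝ) : Matrix (Fin 2) (Fin 2) ℝ) v})
    ∧
    ¬ (∀ x y : EuclideanSpace ℝ (Fin 2), ‖x‖ = 1 → ‖y‖ = 1 → x ≠ y →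
        ∃ ε > (0:ℝ), ∀ n : ℤ,
          ε ≤ ‖nact ((T ^ n : GL (Fin 2) ℝ) : Matrix (Fin 2) (Fin 2) ℝ) x -
               nact ((T ^ n : GL (Fin 2) ℝ) : Matrix (Fin 2) (Fin 2) ℝ) y‖) := by
  constructor
  · -- Part 1: T is distal on ℝ²
    intro v hv hmem
    set ε : ℝ := if v 1 = 0 then |v 0| else |v 1| with hε
    have hεpos : 0 < ε := by
      rcases eq_or_ne (v 1) 0 with h1 | h1
      · have h0 : v 0 ≠ 0 := by
          intro h0
          apply hv
          ext i
          fin_cases i <;> simpa [h0, h1]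
        simp [hε, h1, abs_pos.mpr h0]
      · simp [hε, h1, abs_pos.mpr h1]
    have hsub : {w : EuclideanSpace ℝ (Fin 2) |
          ∃ n : ℤ, w = Matrix.toEuclideanLin ((T ^ n : GL (Fin 2) ℝ) : Matrix (Fin 2) (Fin 2) ℝ) v}
        ⊆ {w : EuclideanSpace ℝ (Fin 2) | ε ≤ ‖w‖} := by
      rintro w ⟨n, rfl⟩
      set w := Matrix.toEuclideanLin ((T ^ n : GL (Fin 2) ℝ) : Matrix (Fin 2) (Fin 2) ℝ) v with hw
      have h0 : w 0 = v 0 + (n:ℝ) * v 1 := by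
        rw [hw, applemma, matzpow T hT]; norm_num
      have h1 : w 1 = v 1 := by
        rw [hw, applemma, matzpow T hT]; norm_num
      rcases eq_or_ne (v 1) 0 with hv1 | hv1
      · have : ε = |v 0| := by simp [hε, hv1]
        rw [this]
        calc |v 0| = |w 0| := by rw [h0, hv1]; ring_nf
        _ ≤ ‖w‖ := abslenorm w 0
      · have : ε = |v 1| := by simp [hε, hv1]
        rw [this]
        calc |v 1| = |w 1| := by rw [h1]
        _ ≤ ‖w‖ := abslenorm w 1
    have hclosed : IsClosed {w : EuclideanSpace ℝ (Fin 2) | ε ≤ ‖w‖} :=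
      isClosed_le continuous_const continuous_norm
    have := closure_minimal hsub hclosed hmem
    simp only [Set.mem_setOf_eq, norm_zero] at this
    linarith
  · -- Part 2: the projective action is not distal
    intro h
    set x : EuclideanSpace ℝ (Fin 2) := (WithLp.equiv 2 (Fin 2 → ℝ)).symm ![1,0] with hxdef
    set y : EuclideanSpace ℝ (Fin 2) := (WithLp.equiv 2 (Fin 2 → ℝ)).symm ![0,1] with hydef
    have hx0 : x 0 = 1 := rfl
    have hx1 : x 1 = 0 := rfl
    have hy0 : y 0 = 0 := rfl
    have hy1 : y 1 = 1 := rfl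
    have hnx : ‖x‖ = 1 := by rw [normtwo, hx0, hx1]; norm_num
    have hny : ‖y‖ = 1 := by rw [normtwo, hy0, hy1]; norm_num
    have hxy : x ≠ y := by
      intro heq
      have : x 0 = y 0 := by rw [heq]
      rw [hx0, hy0] at this
      norm_num at this
    obtain ⟨ε, hεpos, hb⟩ := h x y hnx hny hxy
    -- choose large n
    set N : ℕ := ⌈2/ε⌉₊ + 1 with hN
    set n : ℤ := (N : ℤ) with hn
    set t : ℝ := (N : ℝ) with ht
    have ht1 : (1:ℝ) ≤ t := by
      rw [ht]; exact_mod_cast Nat.one_le_iff_ne_zero.mpr (by omega)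
    have htε : 2 / t < ε := by
      rw [div_lt_iff₀ (by linarith)]
      have h2 : 2/ε < t := by
        rw [ht, hN]
        push_cast
        calc 2/ε ≤ ⌈2/ε⌉₊ := Nat.le_ceil _
        _ < (⌈2/ε⌉₊ : ℝ) + 1 := by linarith
      calc 2 = ε * (2/ε) := by field_simp
      _ < ε * t := mul_lt_mul_of_pos_left h2 hεpos
    specialize hb n
    set A := ((T ^ n : GL (Fin 2) ℝ) : Matrix (Fin 2) (Fin 2) ℝ) with hA
    have hAval : A = !![1,t;0,1] := by
      rw [hA, matzpow T hT]; norm_num [hn, ht]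
    -- nact A x = x
    have hAx : Matrix.toEuclideanLin A x = x := by
      ext i
      fin_cases i <;> rw [applemma, hAval] <;> simp [hx0, hx1]
    have hnactx : nact A x = x := by
      rw [nact, hAx, hnx]; norm_num
    -- nact A y
    set w : EuclideanSpace ℝ (Fin 2) := Matrix.toEuclideanLin A y with hwdef
    have hw0 : w 0 = t := by rw [hwdef, applemma, hAval, hy0, hy1]; norm_num
    have hw1 : w 1 = 1 := by rw [hwdef, applemma, hAval, hy0, hy1]; norm_num
    set s : ℝ := Real.sqrt (t^2 + 1) with hs
    have hspos : 0 < s := Real.sqrt_pos.mpr (by nlinarith)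
    have hssq : s^2 = t^2 + 1 := Real.sq_sqrt (by positivity)
    have hst : t ≤ s := by
      rw [hs]
      calc t = Real.sqrt (t^2) := (Real.sqrt_sq (by linarith)).symm
      _ ≤ _ := Real.sqrt_le_sqrt (by linarith)
    have hnw : ‖w‖ = s := by rw [normtwo, hw0, hw1, hs]; norm_num
    have hnacty : nact A y = s⁻¹ • w := by rw [nact, ← hwdef, hnw]
    -- bound the distance
    have hd0 : (nact A x - nact A y) 0 = 1 - s⁻¹ * t := by
      rw [hnactx, hnacty]
      show x 0 - s⁻¹ * w 0 = _
      rw [hx0, hw0]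
    have hd1 : (nact A x - nact A y) 1 = -s⁻¹ := by
      rw [hnactx, hnacty]
      show x 1 - s⁻¹ * w 1 = _
      rw [hx1, hw1]; ring
    clear_value N n t s x y w A
    have hbound : ‖nact A x - nact A y‖ ≤ 2 / t := by
      rw [normtwo, hd0, hd1]
      calc Real.sqrt ((1 - s⁻¹*t)^2 + (-s⁻¹)^2) ≤ |1 - s⁻¹*t| + |-s⁻¹| := sqrt_sum_sq_le _ _
      _ = (1 - s⁻¹*t) + s⁻¹ := by
          rw [abs_of_nonneg, abs_of_nonpos]
          · ring
          · simp [inv_nonneg]; positivity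
          · have : s⁻¹ * t ≤ 1 := by
              rw [inv_mul_le_iff₀ hspos]; linarith
            linarith
      _ ≤ 2 / t := by
          rw [le_div_iff₀ (show (0:ℝ) < t by linarith)]
          have h1s : (1:ℝ) ≤ s := le_trans ht1 hst
          have hu : (0:ℝ) ≤ s⁻¹ := inv_nonneg.mpr hspos.le
          have hu1 : s⁻¹ ≤ 1 := by
            rw [inv_le_one_iff₀]; right; exact h1s
          have e2 : s⁻¹ * s = 1 := inv_mul_cancel₀ (ne_of_gt hspos)
          have hut : s⁻¹ * t ≤ 1 := by
            calc s⁻¹ * t ≤ s⁻¹ * s := mul_le_mul_of_nonneg_left hst hu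
            _ = 1 := e2
          have e1 : s⁻¹ * t ^ 2 = s - s⁻¹ := by
            have ht2 : t^2 = s^2 - 1 := by linarith
            rw [ht2]
            field_simp
          nlinarith [e1, hst, hu1, hut]
    linarith
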